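/- arXiv:1004.2583 — 3 statements merged into one kernel-verified Lean document; each statement's English description precedes it below -/
import Mathlib

section
/- The affine maps γ1 and γ2 descend to well-defined self-maps of the real 4-torus E1' × E2' = ℂ²/(Λ1' × Λ2') (since conjugation by γ1, resp. γ2, sends the translation by (v1, v2) to the translation by (v1, −v2), resp. (−v1, v2), preserving the lattice Λ1' × Λ2'), and the induced maps of γ1 and of γ2 on E1' × E2' have no fixed points. -/
/-- The affine transformation `γ1(z1, z2) = (z1 + e1/2, −z2)` of `ℂ²`. -/
noncomputable def gammaOne (e1 : ℂ) : Equiv.Perm (ℂ × ℂ) where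
  toFun z := (z.1 + e1 / 2, -z.2)
  invFun z := (z.1 - e1 / 2, -z.2)
  left_inv z := by simp
  right_inv z := by simp

/-- The affine transformation `γ2(z1, z2) = (−z1, z2 + e2/2)` of `ℂ²`. -/
noncomputable def gammaTwo (e2 : ℂ) : Equiv.Perm (ℂ × ℂ) where
  toFun z := (-z.1, z.2 + e2 / 2)
  invFun z := (-z.1, z.2 - e2 / 2)
  left_inv z := by simp
  right_inv z := by simp

/-- The translation `t_v : z ↦ v + z` of `ℂ²`. -/
noncomputable def transl (v : ℂ × ℂ) : Equiv.Perm (ℂ × ℂ) := Equiv.addLeft v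

/-- The Keum–Naie group `Γ ≤ A(2, ℂ)` generated by `γ1, γ2` and the translations
`t_{(e1,0)}, t_{(e1',0)}, t_{(0,e2)}, t_{(0,e2')}`. -/
noncomputable def KNGamma (e1 e1' e2 e2' : ℂ) : Subgroup (Equiv.Perm (ℂ × ℂ)) :=
  Subgroup.closure {gammaOne e1, gammaTwo e2, transl (e1, 0), transl (e1', 0),
    transl (0, e2), transl (0, e2')}

lemma gammaOne_mem (e1 e1' e2 e2' : ℂ) : gammaOne e1 ∈ KNGamma e1 e1' e2 e2' :=
  Subgroup.subset_closure (by simp)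

lemma gammaTwo_mem (e1 e1' e2 e2' : ℂ) : gammaTwo e2 ∈ KNGamma e1 e1' e2 e2' :=
  Subgroup.subset_closure (by simp)

/-- The subgroup `T ≤ Γ` generated by the four translations. -/
noncomputable def KNT (e1 e1' e2 e2' : ℂ) : Subgroup (Equiv.Perm (ℂ × ℂ)) :=
  Subgroup.closure {transl (e1, 0), transl (e1', 0), transl (0, e2), transl (0, e2')}

/-- The lattice `Λ1' × Λ2' = (ℤe1 ⊕ ℤe1') × (ℤe2 ⊕ ℤe2') ⊂ ℂ²`. -/
noncomputable def KNLattice (e1 e1' e2 e2' : ℂ) : AddSubgroup (ℂ × ℂ) :=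
  AddSubgroup.closure {(e1, 0), (e1', 0), (0, e2), (0, e2')}

section KNAux

/-- The additive map `(x, y) ↦ (x, -y)`. -/
def negSndHom : ℂ × ℂ →+ ℂ × ℂ where
  toFun p := (p.1, -p.2)
  map_zero' := by simp
  map_add' p q := by simp [Prod.ext_iff]; ring

/-- The additive map `(x, y) ↦ (-x, y)`. -/
def negFstHom : ℂ × ℂ →+ ℂ × ℂ where
  toFun p := (-p.1, p.2)
  map_zero' := by simp
  map_add' p q := by simp [Prod.ext_iff]; ring

lemma gen1_mem (e1 e1' e2 e2' : ℂ) : (e1, (0:ℂ)) ∈ KNLattice e1 e1' e2 e2' :=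
  AddSubgroup.subset_closure (by simp)
lemma gen2_mem (e1 e1' e2 e2' : ℂ) : (e1', (0:ℂ)) ∈ KNLattice e1 e1' e2 e2' :=
  AddSubgroup.subset_closure (by simp)
lemma gen3_mem (e1 e1' e2 e2' : ℂ) : ((0:ℂ), e2) ∈ KNLattice e1 e1' e2 e2' :=
  AddSubgroup.subset_closure (by simp)
lemma gen4_mem (e1 e1' e2 e2' : ℂ) : ((0:ℂ), e2') ∈ KNLattice e1 e1' e2 e2' :=
  AddSubgroup.subset_closure (by simp)

lemma negSnd_mem (e1 e1' e2 e2' : ℂ) {v : ℂ × ℂ} (hv : v ∈ KNLattice e1 e1' e2 e2') :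
    (v.1, -v.2) ∈ KNLattice e1 e1' e2 e2' := by
  have h : KNLattice e1 e1' e2 e2' ≤
      (KNLattice e1 e1' e2 e2').comap negSndHom := by
    rw [KNLattice, AddSubgroup.closure_le]
    intro p hp
    simp only [Set.mem_insert_iff, Set.mem_singleton_iff] at hp
    rcases hp with rfl | rfl | rfl | rfl
    · exact AddSubgroup.mem_comap.mpr (by simpa [negSndHom, KNLattice] using gen1_mem e1 e1' e2 e2')
    · exact AddSubgroup.mem_comap.mpr (by simpa [negSndHom, KNLattice] using gen2_mem e1 e1' e2 e2')
    · exact AddSubgroup.mem_comap.mpr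
        (by simpa [negSndHom, KNLattice, Prod.neg_mk] using neg_mem (gen3_mem e1 e1' e2 e2'))
    · exact AddSubgroup.mem_comap.mpr
        (by simpa [negSndHom, KNLattice, Prod.neg_mk] using neg_mem (gen4_mem e1 e1' e2 e2'))
  exact h hv

lemma negFst_mem (e1 e1' e2 e2' : ℂ) {v : ℂ × ℂ} (hv : v ∈ KNLattice e1 e1' e2 e2') :
    (-v.1, v.2) ∈ KNLattice e1 e1' e2 e2' := by
  have h : KNLattice e1 e1' e2 e2' ≤
      (KNLattice e1 e1' e2 e2').comap negFstHom := by
    rw [KNLattice, AddSubgroup.closure_le]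
    intro p hp
    simp only [Set.mem_insert_iff, Set.mem_singleton_iff] at hp
    rcases hp with rfl | rfl | rfl | rfl
    · exact AddSubgroup.mem_comap.mpr
        (by simpa [negFstHom, KNLattice, Prod.neg_mk] using neg_mem (gen1_mem e1 e1' e2 e2'))
    · exact AddSubgroup.mem_comap.mpr
        (by simpa [negFstHom, KNLattice, Prod.neg_mk] using neg_mem (gen2_mem e1 e1' e2 e2'))
    · exact AddSubgroup.mem_comap.mpr (by simpa [negFstHom, KNLattice] using gen3_mem e1 e1' e2 e2')
    · exact AddSubgroup.mem_comap.mpr (by simpa [negFstHom, KNLattice] using gen4_mem e1 e1' e2 e2')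
  exact h hv

lemma fst_mem_of_mem (e1 e1' e2 e2' : ℂ) {v : ℂ × ℂ} (hv : v ∈ KNLattice e1 e1' e2 e2') :
    v.1 ∈ AddSubgroup.closure ({e1, e1'} : Set ℂ) := by
  have h : KNLattice e1 e1' e2 e2' ≤
      (AddSubgroup.closure ({e1, e1'} : Set ℂ)).comap (AddMonoidHom.fst ℂ ℂ) := by
    rw [KNLattice, AddSubgroup.closure_le]
    intro p hp
    simp only [Set.mem_insert_iff, Set.mem_singleton_iff] at hp
    rcases hp with rfl | rfl | rfl | rfl
    · exact AddSubgroup.mem_comap.mpr (AddSubgroup.subset_closure (by simp))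
    · exact AddSubgroup.mem_comap.mpr (AddSubgroup.subset_closure (by simp))
    · exact AddSubgroup.mem_comap.mpr (zero_mem _)
    · exact AddSubgroup.mem_comap.mpr (zero_mem _)
  exact h hv

lemma snd_mem_of_mem (e1 e1' e2 e2' : ℂ) {v : ℂ × ℂ} (hv : v ∈ KNLattice e1 e1' e2 e2') :
    v.2 ∈ AddSubgroup.closure ({e2, e2'} : Set ℂ) := by
  have h : KNLattice e1 e1' e2 e2' ≤
      (AddSubgroup.closure ({e2, e2'} : Set ℂ)).comap (AddMonoidHom.snd ℂ ℂ) := by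
    rw [KNLattice, AddSubgroup.closure_le]
    intro p hp
    simp only [Set.mem_insert_iff, Set.mem_singleton_iff] at hp
    rcases hp with rfl | rfl | rfl | rfl
    · exact AddSubgroup.mem_comap.mpr (zero_mem _)
    · exact AddSubgroup.mem_comap.mpr (zero_mem _)
    · exact AddSubgroup.mem_comap.mpr (AddSubgroup.subset_closure (by simp))
    · exact AddSubgroup.mem_comap.mpr (AddSubgroup.subset_closure (by simp))
  exact h hv

/-- `a/2` is never in the lattice `ℤa ⊕ ℤb` when `a, b` are `ℝ`-independent. -/
lemma half_not_mem_closure {a b : ℂ} (h : LinearIndependent ℝ ![a, b]) :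
    a / 2 ∉ AddSubgroup.closure ({a, b} : Set ℂ) := by
  intro hmem
  rw [← Submodule.span_int_eq_addSubgroupClosure, Submodule.mem_toAddSubgroup,
    Submodule.mem_span_pair] at hmem
  obtain ⟨m, n, hmn⟩ := hmem
  have hmn' : (m : ℂ) * a + (n : ℂ) * b = a / 2 := by
    simpa [zsmul_eq_mul] using hmn
  have key : ((m : ℝ) - 1/2) • a + (n : ℝ) • b = 0 := by
    simp only [Complex.real_smul]
    push_cast
    linear_combination hmn'
  have hm0 := (LinearIndependent.pair_iff.mp h _ _ key).1
  have h3 : ((2 * m : ℤ) : ℝ) = 1 := by push_cast; linarith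
  have h4 : (2 * m : ℤ) = 1 := by exact_mod_cast h3
  omega

end KNAux

/-- Keum–Naie: `γ1` and `γ2` descend to well-defined self-maps of the real 4-torus
`E1' × E2' = ℂ²/(Λ1' × Λ2')`, and the induced maps have no fixed points. -/
theorem gamma_descend_to_torus_no_fixed_points
    (e1 e1' e2 e2' : ℂ)
    (h1 : LinearIndependent ℝ ![e1, e1'])
    (h2 : LinearIndependent ℝ ![e2, e2']) :
    ∃ g1 g2 : ((ℂ × ℂ) ⧸ KNLattice e1 e1' e2 e2') →
        ((ℂ × ℂ) ⧸ KNLattice e1 e1' e2 e2'),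
      (∀ z : ℂ × ℂ, g1 (QuotientAddGroup.mk z) = QuotientAddGroup.mk (gammaOne e1 z)) ∧
      (∀ z : ℂ × ℂ, g2 (QuotientAddGroup.mk z) = QuotientAddGroup.mk (gammaTwo e2 z)) ∧
      (∀ x, g1 x ≠ x) ∧ (∀ x, g2 x ≠ x) := by
  classical
  set L := KNLattice e1 e1' e2 e2' with hL
  have w1 : ∀ z w : ℂ × ℂ, (QuotientAddGroup.leftRel L) z w →
      (QuotientAddGroup.leftRel L) (gammaOne e1 z) (gammaOne e1 w) := by
    intro z w hzw
    rw [QuotientAddGroup.leftRel_apply] at hzw ⊢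
    have hmem := negSnd_mem e1 e1' e2 e2' hzw
    show (-(z.1 + e1/2) + (w.1 + e1/2), -(-z.2) + -w.2) ∈ L
    have heq : (-(z.1 + e1/2) + (w.1 + e1/2), -(-z.2) + -w.2)
        = (((-z + w).1 : ℂ), -((-z + w).2)) := by
      simp [Prod.ext_iff]; constructor <;> ring
    rw [heq]
    exact hmem
  have w2 : ∀ z w : ℂ × ℂ, (QuotientAddGroup.leftRel L) z w →
      (QuotientAddGroup.leftRel L) (gammaTwo e2 z) (gammaTwo e2 w) := by
    intro z w hzw
    rw [QuotientAddGroup.leftRel_apply] at hzw ⊢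
    have hmem := negFst_mem e1 e1' e2 e2' hzw
    show (-(-z.1) + -w.1, -(z.2 + e2/2) + (w.2 + e2/2)) ∈ L
    have heq : (-(-z.1) + -w.1, -(z.2 + e2/2) + (w.2 + e2/2))
        = ((-((-z + w).1) : ℂ), ((-z + w).2)) := by
      simp [Prod.ext_iff]; constructor <;> ring
    rw [heq]
    exact hmem
  refine ⟨Quotient.map' (fun z => gammaOne e1 z) w1,
    Quotient.map' (fun z => gammaTwo e2 z) w2, fun z => rfl, fun z => rfl, ?_, ?_⟩
  · intro x hx
    obtain ⟨z, rfl⟩ := QuotientAddGroup.mk_surjective x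
    have hx' : (QuotientAddGroup.mk (gammaOne e1 z) : (ℂ × ℂ) ⧸ L)
        = QuotientAddGroup.mk z := hx
    rw [QuotientAddGroup.eq_iff_sub_mem] at hx'
    have hfst := fst_mem_of_mem e1 e1' e2 e2' hx'
    have heq : (gammaOne e1 z - z).1 = e1 / 2 := by
      show (z.1 + e1/2) - z.1 = e1 / 2
      ring
    rw [heq] at hfst
    exact half_not_mem_closure h1 hfst
  · intro x hx
    obtain ⟨z, rfl⟩ := QuotientAddGroup.mk_surjective x
    have hx' : (QuotientAddGroup.mk (gammaTwo e2 z) : (ℂ × ℂ) ⧸ L)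
        = QuotientAddGroup.mk z := hx
    rw [QuotientAddGroup.eq_iff_sub_mem] at hx'
    have hsnd := snd_mem_of_mem e1 e1' e2 e2' hx'
    have heq : (gammaTwo e2 z - z).2 = e2 / 2 := by
      show (z.2 + e2/2) - z.2 = e2 / 2
      ring
    rw [heq] at hsnd
    exact half_not_mem_closure h2 hsnd
end

section
/- The subgroups Γ1 := ⟨γ1, t_{(e1',0)}, t_{(0,e2)}, t_{(0,e2')}⟩ and Γ2 := ⟨t_{(e1,0)}, t_{(e1',0)}, γ2, t_{(0,e2')}⟩ of Γ each have index 2 in Γ. -/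
/-- The subgroup `Γ1 = ⟨γ1, t_{(e1',0)}, t_{(0,e2)}, t_{(0,e2')}⟩` of `Γ`. -/
noncomputable def KNGammaOne (e1 e1' e2 e2' : ℂ) : Subgroup (Equiv.Perm (ℂ × ℂ)) :=
  Subgroup.closure {gammaOne e1, transl (e1', 0), transl (0, e2), transl (0, e2')}

/-- The subgroup `Γ2 = ⟨t_{(e1,0)}, t_{(e1',0)}, γ2, t_{(0,e2')}⟩` of `Γ`. -/
noncomputable def KNGammaTwo (e1 e1' e2 e2' : ℂ) : Subgroup (Equiv.Perm (ℂ × ℂ)) :=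
  Subgroup.closure {transl (e1, 0), transl (e1', 0), gammaTwo e2, transl (0, e2')}


section KNAux

open Subgroup Equiv

/-- The "multiplier" of `g` along a projection `p` relative to a base point `b`. -/
noncomputable def KNE (p : ℂ × ℂ → ℂ) (b : ℂ × ℂ) (g : Equiv.Perm (ℂ × ℂ)) : ℂ :=
  p (g b) - p (g 0)

/-- `g` acts affinely along the projection `p` with multiplier `KNE p b g`. -/
def KNQ (p : ℂ × ℂ → ℂ) (b : ℂ × ℂ) (g : Equiv.Perm (ℂ × ℂ)) : Prop :=
  ∀ z w : ℂ × ℂ, p (g z) - p (g w) = KNE p b g * (p z - p w)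

@[simp] lemma gammaOne_apply (e1 : ℂ) (z : ℂ × ℂ) :
    gammaOne e1 z = (z.1 + e1 / 2, -z.2) := rfl
@[simp] lemma gammaOne_inv_apply (e1 : ℂ) (z : ℂ × ℂ) :
    (gammaOne e1)⁻¹ z = (z.1 - e1 / 2, -z.2) := rfl
@[simp] lemma gammaTwo_apply (e2 : ℂ) (z : ℂ × ℂ) :
    gammaTwo e2 z = (-z.1, z.2 + e2 / 2) := rfl
@[simp] lemma gammaTwo_inv_apply (e2 : ℂ) (z : ℂ × ℂ) :
    (gammaTwo e2)⁻¹ z = (-z.1, z.2 - e2 / 2) := rfl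
@[simp] lemma transl_apply (v z : ℂ × ℂ) : transl v z = v + z := rfl
@[simp] lemma transl_inv_apply (v z : ℂ × ℂ) : (transl v)⁻¹ z = -v + z := rfl

variable {p : ℂ × ℂ → ℂ} {b : ℂ × ℂ}

lemma KNE_mul (hb : p b - p 0 = 1) {g h : Equiv.Perm (ℂ × ℂ)}
    (hg : KNQ p b g) (hh : KNQ p b h) :
    KNE p b (g * h) = KNE p b g * KNE p b h := by
  have h1 := hg (h b) (h 0)
  have h2 := hh b 0
  simp only [KNE, Equiv.Perm.mul_apply] at h1 h2 ⊢
  rw [h1, h2, hb, mul_one]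

lemma KNQ_mul (hb : p b - p 0 = 1) {g h : Equiv.Perm (ℂ × ℂ)}
    (hg : KNQ p b g) (hh : KNQ p b h) : KNQ p b (g * h) := by
  intro z w
  rw [KNE_mul hb hg hh]
  simp only [Equiv.Perm.mul_apply]
  rw [hg (h z) (h w), hh z w]
  ring

lemma KNQ_one (hb : p b - p 0 = 1) : KNQ p b 1 := by
  intro z w
  simp only [KNE, Equiv.Perm.one_apply]
  rw [hb, one_mul]

lemma KNE_one : KNE p b 1 = p b - p 0 := by simp [KNE]

lemma KNQ_inv (hb : p b - p 0 = 1) {g : Equiv.Perm (ℂ × ℂ)} (hg : KNQ p b g)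
    (hE : KNE p b g = 1 ∨ KNE p b g = -1) :
    KNQ p b g⁻¹ ∧ KNE p b g⁻¹ = KNE p b g := by
  have key : ∀ z w : ℂ × ℂ, p (g⁻¹ z) - p (g⁻¹ w) = KNE p b g * (p z - p w) := by
    intro z w
    have h0 := hg (g⁻¹ z) (g⁻¹ w)
    simp only [Equiv.Perm.coe_inv, Equiv.apply_symm_apply] at h0
    rcases hE with h | h
    · rw [h] at h0 ⊢; linear_combination -h0
    · rw [h] at h0 ⊢; linear_combination h0
  have hE' : KNE p b g⁻¹ = KNE p b g := by
    have h0 := key b 0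
    rw [hb, mul_one] at h0
    exact h0
  exact ⟨fun z w => by rw [key z w, hE'], hE'⟩

/-- On the closure of a set of "even" elements, everything is affine with multiplier 1. -/
lemma KNE_closure_one (hb : p b - p 0 = 1) {S : Set (Equiv.Perm (ℂ × ℂ))}
    (hS : ∀ x ∈ S, KNQ p b x ∧ KNE p b x = 1) :
    ∀ g ∈ Subgroup.closure S, KNQ p b g ∧ KNE p b g = 1 := by
  intro g hg
  induction hg using Subgroup.closure_induction with
  | mem x hx => exact hS x hx
  | one => exact ⟨KNQ_one hb, by rw [KNE_one, hb]⟩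
  | mul x y hx hy ihx ihy =>
      exact ⟨KNQ_mul hb ihx.1 ihy.1, by rw [KNE_mul hb ihx.1 ihy.1, ihx.2, ihy.2, one_mul]⟩
  | inv x hx ihx =>
      obtain ⟨q, e⟩ := KNQ_inv hb ihx.1 (Or.inl ihx.2)
      exact ⟨q, by rw [e, ihx.2]⟩

/-- Conjugation stabilizes a closure as soon as it maps generators into the closure. -/
lemma conj_closure_mem {G : Type*} [Group G] {S : Set G} {c : G}
    (hS : ∀ x ∈ S, c⁻¹ * x * c ∈ Subgroup.closure S) :
    ∀ g ∈ Subgroup.closure S, c⁻¹ * g * c ∈ Subgroup.closure S := by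
  intro g hg
  induction hg using Subgroup.closure_induction with
  | mem x hx => exact hS x hx
  | one => simpa using one_mem _
  | mul x y hx hy ihx ihy =>
      have := mul_mem ihx ihy
      rwa [show (c⁻¹ * x * c) * (c⁻¹ * y * c) = c⁻¹ * (x * y) * c by group] at this
  | inv x hx ihx =>
      have := inv_mem ihx
      rwa [show (c⁻¹ * x * c)⁻¹ = c⁻¹ * x⁻¹ * c by group] at this

/-- Two-coset decomposition of a closure. -/
lemma coset_decomp {G : Type*} [Group G] {S : Set G} {H : Subgroup G} {c : G}
    (conj : ∀ h ∈ H, c⁻¹ * h * c ∈ H) (sq : c * c ∈ H)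
    (gens : ∀ x ∈ S, x ∈ H ∨ c⁻¹ * x ∈ H) :
    ∀ g ∈ Subgroup.closure S, g ∈ H ∨ c⁻¹ * g ∈ H := by
  intro g hg
  induction hg using Subgroup.closure_induction with
  | mem x hx => exact gens x hx
  | one => exact Or.inl (one_mem _)
  | mul x y hx hy ihx ihy =>
      rcases ihx with ihx | ihx <;> rcases ihy with ihy | ihy
      · exact Or.inl (mul_mem ihx ihy)
      · refine Or.inr ?_
        have := mul_mem (conj _ ihx) ihy
        rwa [show (c⁻¹ * x * c) * (c⁻¹ * y) = c⁻¹ * (x * y) by group] at this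
      · refine Or.inr ?_
        have := mul_mem ihx ihy
        rwa [show (c⁻¹ * x) * y = c⁻¹ * (x * y) by group] at this
      · refine Or.inl ?_
        have := mul_mem (mul_mem sq (conj _ ihx)) ihy
        rwa [show (c * c) * (c⁻¹ * (c⁻¹ * x) * c) * (c⁻¹ * y) = x * y by group] at this
  | inv x hx ihx =>
      rcases ihx with ihx | ihx
      · exact Or.inl (inv_mem ihx)
      · refine Or.inr ?_
        have := mul_mem (conj _ (inv_mem ihx)) (inv_mem sq)
        rwa [show (c⁻¹ * (c⁻¹ * x)⁻¹ * c) * (c * c)⁻¹ = c⁻¹ * x⁻¹ by group] at this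

/-- Index-two criterion from a two-coset cover and a separation property. -/
lemma index_two_aux {G : Type*} [Group G] {Γ H : Subgroup G} {c : G} (hc : c ∈ Γ)
    (cover : ∀ g ∈ Γ, g ∈ H ∨ g * c ∈ H)
    (sep : ∀ g ∈ Γ, ¬(g ∈ H ∧ g * c ∈ H)) :
    (H.subgroupOf Γ).index = 2 := by
  rw [Subgroup.index_eq_two_iff]
  refine ⟨⟨c, hc⟩, fun g => ?_⟩
  simp only [Xor', Subgroup.mem_subgroupOf, Subgroup.coe_mul]
  rcases cover g g.2 with h | h
  · exact Or.inr ⟨h, fun hc' => sep g g.2 ⟨h, hc'⟩⟩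
  · exact Or.inl ⟨h, fun hc' => sep g g.2 ⟨hc', h⟩⟩

lemma transl_mul (v w : ℂ × ℂ) : transl v * transl w = transl (v + w) :=
  Equiv.ext fun z => by simp [transl, add_assoc]

lemma transl_inv (v : ℂ × ℂ) : (transl v)⁻¹ = transl (-v) :=
  Equiv.ext fun z => rfl

lemma gammaOne_sq (e1 : ℂ) : gammaOne e1 * gammaOne e1 = transl (e1, 0) :=
  Equiv.ext fun z => by
    simp [Equiv.Perm.mul_apply, Prod.ext_iff]; (try constructor) <;> ring

lemma gammaTwo_sq (e2 : ℂ) : gammaTwo e2 * gammaTwo e2 = transl (0, e2) :=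
  Equiv.ext fun z => by
    simp [Equiv.Perm.mul_apply, Prod.ext_iff]; (try constructor) <;> ring

lemma conjA1 (e1 e2 : ℂ) :
    (gammaTwo e2)⁻¹ * gammaOne e1 * (gammaTwo e2) =
      (transl (0, e2))⁻¹ * (gammaOne e1)⁻¹ :=
  Equiv.ext fun z => by
    simp [Equiv.Perm.mul_apply, Prod.ext_iff]
    (try constructor) <;> ring

lemma conjA2 (a e2 : ℂ) :
    (gammaTwo e2)⁻¹ * transl (a, 0) * (gammaTwo e2) = transl (-a, 0) :=
  Equiv.ext fun z => by
    simp [Equiv.Perm.mul_apply, Prod.ext_iff]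
    (try constructor) <;> ring

lemma conjA3 (b e2 : ℂ) :
    (gammaTwo e2)⁻¹ * transl (0, b) * (gammaTwo e2) = transl (0, b) :=
  Equiv.ext fun z => by
    simp [Equiv.Perm.mul_apply, Prod.ext_iff]
    (try constructor) <;> ring

lemma conjB1 (e1 e2 : ℂ) :
    (gammaOne e1)⁻¹ * gammaTwo e2 * (gammaOne e1) =
      (transl (e1, 0))⁻¹ * (gammaTwo e2)⁻¹ :=
  Equiv.ext fun z => by
    simp [Equiv.Perm.mul_apply, Prod.ext_iff]
    (try constructor) <;> ring

lemma conjB2 (a e1 : ℂ) :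
    (gammaOne e1)⁻¹ * transl (a, 0) * (gammaOne e1) = transl (a, 0) :=
  Equiv.ext fun z => by
    simp [Equiv.Perm.mul_apply, Prod.ext_iff]
    (try constructor) <;> ring

lemma conjB3 (b e1 : ℂ) :
    (gammaOne e1)⁻¹ * transl (0, b) * (gammaOne e1) = transl (0, -b) :=
  Equiv.ext fun z => by
    simp [Equiv.Perm.mul_apply, Prod.ext_iff]
    (try constructor) <;> ring

/-- E/Q facts for generators along the first coordinate. -/
lemma KNQ1_gammaOne (e1 : ℂ) :
    KNQ Prod.fst (1, 0) (gammaOne e1) ∧ KNE Prod.fst (1, 0) (gammaOne e1) = 1 := by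
  constructor
  · intro z w; simp [KNQ, KNE, gammaOne]
  · simp [KNE, gammaOne]

lemma KNQ1_gammaTwo (e2 : ℂ) :
    KNQ Prod.fst (1, 0) (gammaTwo e2) ∧ KNE Prod.fst (1, 0) (gammaTwo e2) = -1 := by
  constructor
  · intro z w; simp [KNQ, KNE, gammaTwo]; ring
  · simp [KNE, gammaTwo]

lemma KNQ1_transl (v : ℂ × ℂ) :
    KNQ Prod.fst (1, 0) (transl v) ∧ KNE Prod.fst (1, 0) (transl v) = 1 := by
  constructor
  · intro z w; simp [KNQ, KNE, transl]
  · simp [KNE, transl]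

lemma KNQ2_gammaTwo (e2 : ℂ) :
    KNQ Prod.snd (0, 1) (gammaTwo e2) ∧ KNE Prod.snd (0, 1) (gammaTwo e2) = 1 := by
  constructor
  · intro z w; simp [KNQ, KNE, gammaTwo]
  · simp [KNE, gammaTwo]

lemma KNQ2_gammaOne (e1 : ℂ) :
    KNQ Prod.snd (0, 1) (gammaOne e1) ∧ KNE Prod.snd (0, 1) (gammaOne e1) = -1 := by
  constructor
  · intro z w; simp [KNQ, KNE, gammaOne]; ring
  · simp [KNE, gammaOne]

lemma KNQ2_transl (v : ℂ × ℂ) :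
    KNQ Prod.snd (0, 1) (transl v) ∧ KNE Prod.snd (0, 1) (transl v) = 1 := by
  constructor
  · intro z w; simp [KNQ, KNE, transl]
  · simp [KNE, transl]

lemma hb1 : (Prod.fst ((1 : ℂ), (0 : ℂ)) - Prod.fst ((0 : ℂ × ℂ))) = 1 := by simp

lemma hb2 : (Prod.snd ((0 : ℂ), (1 : ℂ)) - Prod.snd ((0 : ℂ × ℂ))) = 1 := by simp

end KNAux

section KNMain

open Subgroup

variable (e1 e1' e2 e2' : ℂ)

lemma KNGammaOne_le : KNGammaOne e1 e1' e2 e2' ≤ KNGamma e1 e1' e2 e2' := by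
  rw [KNGammaOne, Subgroup.closure_le]
  intro x hx
  simp only [Set.mem_insert_iff, Set.mem_singleton_iff] at hx
  rcases hx with rfl | rfl | rfl | rfl <;> exact Subgroup.subset_closure (by simp [KNGamma])

lemma KNGammaTwo_le : KNGammaTwo e1 e1' e2 e2' ≤ KNGamma e1 e1' e2 e2' := by
  rw [KNGammaTwo, Subgroup.closure_le]
  intro x hx
  simp only [Set.mem_insert_iff, Set.mem_singleton_iff] at hx
  rcases hx with rfl | rfl | rfl | rfl <;> exact Subgroup.subset_closure (by simp [KNGamma])

lemma KNGammaOne_E :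
    ∀ g ∈ KNGammaOne e1 e1' e2 e2',
      KNQ Prod.fst (1, 0) g ∧ KNE Prod.fst (1, 0) g = 1 := by
  apply KNE_closure_one hb1
  intro x hx
  simp only [Set.mem_insert_iff, Set.mem_singleton_iff] at hx
  rcases hx with rfl | rfl | rfl | rfl
  exacts [KNQ1_gammaOne e1, KNQ1_transl _, KNQ1_transl _, KNQ1_transl _]

lemma KNGammaTwo_E :
    ∀ g ∈ KNGammaTwo e1 e1' e2 e2',
      KNQ Prod.snd (0, 1) g ∧ KNE Prod.snd (0, 1) g = 1 := by
  apply KNE_closure_one hb2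
  intro x hx
  simp only [Set.mem_insert_iff, Set.mem_singleton_iff] at hx
  rcases hx with rfl | rfl | rfl | rfl
  exacts [KNQ2_transl _, KNQ2_transl _, KNQ2_gammaTwo e2, KNQ2_transl _]

lemma KNGammaOne_conj :
    ∀ h ∈ KNGammaOne e1 e1' e2 e2',
      (gammaTwo e2)⁻¹ * h * gammaTwo e2 ∈ KNGammaOne e1 e1' e2 e2' := by
  apply conj_closure_mem
  intro x hx
  simp only [Set.mem_insert_iff, Set.mem_singleton_iff] at hx
  have g1 : gammaOne e1 ∈ KNGammaOne e1 e1' e2 e2' := Subgroup.subset_closure (by simp [KNGammaOne])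
  have t1 : transl (e1', 0) ∈ KNGammaOne e1 e1' e2 e2' := Subgroup.subset_closure (by simp [KNGammaOne])
  have t2 : transl (0, e2) ∈ KNGammaOne e1 e1' e2 e2' := Subgroup.subset_closure (by simp [KNGammaOne])
  have t3 : transl (0, e2') ∈ KNGammaOne e1 e1' e2 e2' := Subgroup.subset_closure (by simp [KNGammaOne])
  rcases hx with rfl | rfl | rfl | rfl
  · rw [conjA1]
    exact mul_mem (inv_mem t2) (inv_mem g1)
  · rw [conjA2]
    rw [show ((-e1', (0 : ℂ)) : ℂ × ℂ) = -(e1', 0) by simp, ← transl_inv]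
    exact inv_mem t1
  · rw [conjA3]; exact t2
  · rw [conjA3]; exact t3

lemma KNGammaTwo_conj :
    ∀ h ∈ KNGammaTwo e1 e1' e2 e2',
      (gammaOne e1)⁻¹ * h * gammaOne e1 ∈ KNGammaTwo e1 e1' e2 e2' := by
  apply conj_closure_mem
  intro x hx
  simp only [Set.mem_insert_iff, Set.mem_singleton_iff] at hx
  have g2 : gammaTwo e2 ∈ KNGammaTwo e1 e1' e2 e2' := Subgroup.subset_closure (by simp [KNGammaTwo])
  have t1 : transl (e1, 0) ∈ KNGammaTwo e1 e1' e2 e2' := Subgroup.subset_closure (by simp [KNGammaTwo])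
  have t2 : transl (e1', 0) ∈ KNGammaTwo e1 e1' e2 e2' := Subgroup.subset_closure (by simp [KNGammaTwo])
  have t3 : transl (0, e2') ∈ KNGammaTwo e1 e1' e2 e2' := Subgroup.subset_closure (by simp [KNGammaTwo])
  rcases hx with rfl | rfl | rfl | rfl
  · rw [conjB2]; exact t1
  · rw [conjB2]; exact t2
  · rw [conjB1]
    exact mul_mem (inv_mem t1) (inv_mem g2)
  · rw [conjB3]
    rw [show (((0 : ℂ), -e2') : ℂ × ℂ) = -(0, e2') by simp, ← transl_inv]
    exact inv_mem t3

lemma KNGammaOne_sq_mem : gammaTwo e2 * gammaTwo e2 ∈ KNGammaOne e1 e1' e2 e2' := by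
  rw [gammaTwo_sq]
  exact Subgroup.subset_closure (by simp [KNGammaOne])

lemma KNGammaTwo_sq_mem : gammaOne e1 * gammaOne e1 ∈ KNGammaTwo e1 e1' e2 e2' := by
  rw [gammaOne_sq]
  exact Subgroup.subset_closure (by simp [KNGammaTwo])

lemma KNGammaOne_cover :
    ∀ g ∈ KNGamma e1 e1' e2 e2',
      g ∈ KNGammaOne e1 e1' e2 e2' ∨
        (gammaTwo e2)⁻¹ * g ∈ KNGammaOne e1 e1' e2 e2' := by
  apply coset_decomp (KNGammaOne_conj e1 e1' e2 e2') (KNGammaOne_sq_mem e1 e1' e2 e2')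
  intro x hx
  simp only [Set.mem_insert_iff, Set.mem_singleton_iff] at hx
  rcases hx with rfl | rfl | rfl | rfl | rfl | rfl
  · exact Or.inl (Subgroup.subset_closure (by simp [KNGammaOne]))
  · exact Or.inr (by rw [inv_mul_cancel]; exact one_mem _)
  · refine Or.inl ?_
    rw [← gammaOne_sq]
    exact mul_mem (Subgroup.subset_closure (by simp [KNGammaOne]))
      (Subgroup.subset_closure (by simp [KNGammaOne]))
  · exact Or.inl (Subgroup.subset_closure (by simp [KNGammaOne]))
  · exact Or.inl (Subgroup.subset_closure (by simp [KNGammaOne]))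
  · exact Or.inl (Subgroup.subset_closure (by simp [KNGammaOne]))

lemma KNGammaTwo_cover :
    ∀ g ∈ KNGamma e1 e1' e2 e2',
      g ∈ KNGammaTwo e1 e1' e2 e2' ∨
        (gammaOne e1)⁻¹ * g ∈ KNGammaTwo e1 e1' e2 e2' := by
  apply coset_decomp (KNGammaTwo_conj e1 e1' e2 e2') (KNGammaTwo_sq_mem e1 e1' e2 e2')
  intro x hx
  simp only [Set.mem_insert_iff, Set.mem_singleton_iff] at hx
  rcases hx with rfl | rfl | rfl | rfl | rfl | rfl
  · exact Or.inr (by rw [inv_mul_cancel]; exact one_mem _)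
  · exact Or.inl (Subgroup.subset_closure (by simp [KNGammaTwo]))
  · exact Or.inl (Subgroup.subset_closure (by simp [KNGammaTwo]))
  · exact Or.inl (Subgroup.subset_closure (by simp [KNGammaTwo]))
  · refine Or.inl ?_
    rw [← gammaTwo_sq]
    exact mul_mem (Subgroup.subset_closure (by simp [KNGammaTwo]))
      (Subgroup.subset_closure (by simp [KNGammaTwo]))
  · exact Or.inl (Subgroup.subset_closure (by simp [KNGammaTwo]))

end KNMain

/-- Keum–Naie: the subgroups `Γ1 = ⟨γ1, e1', e2, e2'⟩` and `Γ2 = ⟨e1, e1', γ2, e2'⟩`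
of `Γ` each have index 2 in `Γ`. -/
theorem KNGammaOne_KNGammaTwo_index_two
    (e1 e1' e2 e2' : ℂ)
    (h1 : LinearIndependent ℝ ![e1, e1'])
    (h2 : LinearIndependent ℝ ![e2, e2']) :
    KNGammaOne e1 e1' e2 e2' ≤ KNGamma e1 e1' e2 e2' ∧
    ((KNGammaOne e1 e1' e2 e2').subgroupOf (KNGamma e1 e1' e2 e2')).index = 2 ∧
    KNGammaTwo e1 e1' e2 e2' ≤ KNGamma e1 e1' e2 e2' ∧
    ((KNGammaTwo e1 e1' e2 e2').subgroupOf (KNGamma e1 e1' e2 e2')).index = 2 := by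
  have cover1 := KNGammaOne_cover e1 e1' e2 e2'
  have cover2 := KNGammaTwo_cover e1 e1' e2 e2'
  have E1 := KNGammaOne_E e1 e1' e2 e2'
  have E2 := KNGammaTwo_E e1 e1' e2 e2'
  refine ⟨KNGammaOne_le e1 e1' e2 e2', ?_, KNGammaTwo_le e1 e1' e2 e2', ?_⟩
  · apply index_two_aux (gammaTwo_mem e1 e1' e2 e2')
    · intro g hg
      rcases cover1 g hg with h | h
      · exact Or.inl h
      · refine Or.inr ?_
        have := mul_mem (KNGammaOne_sq_mem e1 e1' e2 e2')
          (KNGammaOne_conj e1 e1' e2 e2' _ h)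
        rwa [show (gammaTwo e2 * gammaTwo e2) *
            ((gammaTwo e2)⁻¹ * ((gammaTwo e2)⁻¹ * g) * gammaTwo e2) = g * gammaTwo e2
          by group] at this
    · rintro g hg ⟨h1, h2⟩
      obtain ⟨q1, v1⟩ := E1 g h1
      obtain ⟨q2, v2⟩ := E1 _ h2
      rw [KNE_mul hb1 q1 (KNQ1_gammaTwo e2).1, v1, one_mul, (KNQ1_gammaTwo e2).2] at v2
      norm_num at v2
  · apply index_two_aux (gammaOne_mem e1 e1' e2 e2')
    · intro g hg
      rcases cover2 g hg with h | h
      · exact Or.inl h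
      · refine Or.inr ?_
        have := mul_mem (KNGammaTwo_sq_mem e1 e1' e2 e2')
          (KNGammaTwo_conj e1 e1' e2 e2' _ h)
        rwa [show (gammaOne e1 * gammaOne e1) *
            ((gammaOne e1)⁻¹ * ((gammaOne e1)⁻¹ * g) * gammaOne e1) = g * gammaOne e1
          by group] at this
    · rintro g hg ⟨h1, h2⟩
      obtain ⟨q1, v1⟩ := E2 g h1
      obtain ⟨q2, v2⟩ := E2 _ h2
      rw [KNE_mul hb2 q1 (KNQ2_gammaOne e1).1, v1, one_mul, (KNQ2_gammaOne e1).2] at v2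
      norm_num at v2
end

section
/- In the projective special linear group PSL(2, 𝔽7) (of order 168) there exist elements x, y, z with orders 2, 3, 7 respectively such that x y z = 1 and ⟨x, y, z⟩ = PSL(2, 𝔽7), and there exist elements u, v, w, each of order 4, such that u v w = 1 and ⟨u, v, w⟩ = PSL(2, 𝔽7). -/
namespace PSL27Aux

open Matrix Subgroup

instance : Fact (Nat.Prime 7) := ⟨by norm_num⟩

abbrev SL7 := Matrix.SpecialLinearGroup (Fin 2) (ZMod 7)

def MS : SL7 := ⟨!![0,-1;1,0], by decide⟩
def MT : SL7 := ⟨!![1,1;0,1], by decide⟩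
def MY : SL7 := ⟨!![0,1;-1,1], by decide⟩
def MU : SL7 := ⟨!![0,1;6,3], by decide⟩
def MV : SL7 := ⟨!![0,1;6,4], by decide⟩
def MW : SL7 := ⟨!![4,3;3,6], by decide⟩
def negOne : SL7 := ⟨!![-1,0;0,-1], by decide⟩

lemma negOne_mem_center : negOne ∈ center SL7 := by
  rw [Matrix.SpecialLinearGroup.mem_center_iff]
  exact ⟨-1, by decide, by ext i j; fin_cases i <;> fin_cases j <;>
    simp [negOne, Matrix.scalar_apply, Matrix.diagonal]⟩

lemma not_center {A : SL7} (h : A.1 0 1 ≠ 0) : A ∉ center SL7 := by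
  intro hA
  have := Matrix.SpecialLinearGroup.scalar_eq_self_of_mem_center hA 0
  have h2 := congr_fun (congr_fun this 0) 1
  rw [Matrix.scalar_apply, Matrix.diagonal_apply_ne _ (by decide)] at h2
  exact h h2.symm

def MN (k : ZMod 7) : SL7 := ⟨!![1,k;0,1], by simp [Matrix.det_fin_two_of]⟩

lemma MT_pow (n : ℕ) : MT ^ n = MN (n : ZMod 7) := by
  induction n with
  | zero => exact Subtype.ext (by simp [MN]; decide)
  | succ n ih =>
    rw [pow_succ, ih]
    refine Subtype.ext ?_
    show (!![1,(n : ZMod 7);0,1] * !![1,1;0,1] : Matrix (Fin 2) (Fin 2) (ZMod 7))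
      = !![1,((n+1 : ℕ) : ZMod 7);0,1]
    rw [Matrix.mul_fin_two]
    push_cast [add_comm]
    norm_num

lemma MN_mem (k : ZMod 7) : MN k ∈ Subgroup.closure ({MS, MT} : Set SL7) := by
  have : MN k = MT ^ k.val := by rw [MT_pow, ZMod.natCast_val, ZMod.cast_id]
  rw [this]
  exact pow_mem (subset_closure (by simp)) _

set_option linter.unnecessarySeqFocus false in
lemma key (g : SL7) (hc : g.1 1 0 ≠ 0) : g ∈ Subgroup.closure ({MS, MT} : Set SL7) := by
  set a := g.1 0 0 with ha
  set b := g.1 0 1 with hb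
  set c := g.1 1 0 with hcc
  set d := g.1 1 1 with hd
  have hdet : a * d - b * c = 1 := by
    rw [ha, hb, hcc, hd, ← Matrix.det_fin_two]; exact g.2
  have hg : g = MN ((a+1)/c) * MS * MN c * MS * MN ((d+1)/c) := by
    refine Subtype.ext ?_
    show g.1 = (((!![1,(a+1)/c;0,1] : Matrix _ _ _) * !![0,-1;1,0]) * !![1,c;0,1])
      * !![0,-1;1,0] * !![1,(d+1)/c;0,1]
    have hg1 : g.1 = !![a,b;c,d] := Matrix.eta_fin_two g.1
    rw [hg1]
    simp only [Matrix.mul_fin_two]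
    ext i j
    fin_cases i <;> fin_cases j <;>
      simp only [Matrix.cons_val_zero, Matrix.cons_val_one, Matrix.head_cons,
        Matrix.head_fin_const, Matrix.cons_val', Matrix.empty_val',
        Matrix.cons_val_fin_one, Matrix.of_apply, Fin.zero_eta, Fin.mk_one] <;>
      field_simp <;> ring_nf <;> first | linear_combination -hdet | linear_combination (-c) * hdet
  rw [hg]
  exact mul_mem (mul_mem (mul_mem (mul_mem (MN_mem _) (subset_closure (by simp))) (MN_mem _))
    (subset_closure (by simp))) (MN_mem _)

lemma gen (g : SL7) : g ∈ Subgroup.closure ({MS, MT} : Set SL7) := by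
  by_cases hc : g.1 1 0 ≠ 0
  · exact key g hc
  · push_neg at hc
    have hS : MS ∈ Subgroup.closure ({MS, MT} : Set SL7) := subset_closure (by simp)
    have h1 : (g * MS).1 1 0 ≠ 0 := by
      have hd : g.1 0 0 * g.1 1 1 - g.1 0 1 * g.1 1 0 = 1 := by
        rw [← Matrix.det_fin_two]; exact g.2
      rw [hc, mul_zero, sub_zero] at hd
      show (g.1 * MS.1) 1 0 ≠ 0
      rw [Matrix.mul_apply]
      intro h
      simp [MS, Fin.sum_univ_two, hc] at h
      rw [h, mul_zero] at hd
      exact zero_ne_one hd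
    have := key (g * MS) h1
    have h2 : g = (g * MS) * MS⁻¹ := by group
    rw [h2]
    exact mul_mem this (inv_mem hS)

lemma gen_top : Subgroup.closure ({MS, MT} : Set SL7) = ⊤ :=
  eq_top_iff.mpr fun g _ => gen g

end PSL27Aux

/-- `PSL(2, 𝔽7)`: the quotient of `SL(2, ℤ/7)` by its center. -/
abbrev PSL₂F₇ : Type :=
  Matrix.SpecialLinearGroup (Fin 2) (ZMod 7) ⧸
    Subgroup.center (Matrix.SpecialLinearGroup (Fin 2) (ZMod 7))

namespace PSL27Aux

open Matrix Subgroup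

def π : SL7 →* PSL₂F₇ := QuotientGroup.mk' _

lemma π_surj : Function.Surjective π := QuotientGroup.mk'_surjective _

lemma π_eq_one {A : SL7} (h : A ∈ center SL7) : π A = 1 :=
  (QuotientGroup.eq_one_iff A).mpr h

lemma π_ne_one {A : SL7} (h : A.1 0 1 ≠ 0) : π A ≠ 1 :=
  fun e => not_center h ((QuotientGroup.eq_one_iff A).mp e)

lemma order_four {A : SL7} (h4 : A ^ 4 = negOne) (h2 : (A^2).1 0 1 ≠ 0) :
    orderOf (π A) = 4 := by
  have : (4 : ℕ) = 2 ^ 2 := by norm_num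
  rw [this]
  refine orderOf_eq_prime_pow ?_ ?_
  · rw [pow_one, ← map_pow]
    exact π_ne_one h2
  · rw [← map_pow]
    show π (A ^ 4) = 1
    rw [h4]; exact π_eq_one negOne_mem_center

/-- closure of image of the two standard generators is everything -/
lemma closure_contains_top {H : Subgroup PSL₂F₇} (hS : π MS ∈ H) (hT : π MT ∈ H) : H = ⊤ := by
  rw [eq_top_iff]
  rintro g -
  obtain ⟨G, rfl⟩ := π_surj g
  have hG : G ∈ Subgroup.closure ({MS, MT} : Set SL7) := gen G
  have : π G ∈ Subgroup.map π (closure ({MS, MT} : Set SL7)) := Subgroup.mem_map_of_mem π hG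
  rw [MonoidHom.map_closure] at this
  have himg : π '' {MS, MT} = {π MS, π MT} := Set.image_pair π MS MT
  rw [himg] at this
  refine (Subgroup.closure_le H).mpr ?_ this
  rintro x (rfl | rfl)
  · exact hS
  · simpa using hT

end PSL27Aux

open PSL27Aux Subgroup in
/-- In `PSL(2, 𝔽7)` there is a system of generators of signature `(0; 2, 3, 7)`:
elements `x, y, z` of orders `2, 3, 7` with `x y z = 1` generating the group; and a
system of generators of signature `(0; 4, 4, 4)`: elements `u, v, w` of order `4`
with `u v w = 1` generating the group. -/
theorem psl_two_seven_generators_237_and_444 :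
    (∃ x y z : PSL₂F₇,
      orderOf x = 2 ∧ orderOf y = 3 ∧ orderOf z = 7 ∧
      x * y * z = 1 ∧ Subgroup.closure {x, y, z} = ⊤) ∧
    (∃ u v w : PSL₂F₇,
      orderOf u = 4 ∧ orderOf v = 4 ∧ orderOf w = 4 ∧
      u * v * w = 1 ∧ Subgroup.closure {u, v, w} = ⊤) := by
  constructor
  · refine ⟨π MS, π MY, π MT, ?_, ?_, ?_, ?_, ?_⟩
    · refine orderOf_eq_prime ?_ (π_ne_one (by decide))
      rw [← map_pow]
      have : MS ^ 2 = negOne := Subtype.ext (by decide)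
      rw [this]; exact π_eq_one negOne_mem_center
    · refine orderOf_eq_prime ?_ (π_ne_one (by decide))
      rw [← map_pow]
      have : MY ^ 3 = negOne := Subtype.ext (by decide)
      rw [this]; exact π_eq_one negOne_mem_center
    · refine orderOf_eq_prime ?_ (π_ne_one (by decide))
      rw [← map_pow]
      have : MT ^ 7 = 1 := Subtype.ext (by decide)
      rw [this, map_one]
    · rw [← map_mul, ← map_mul]
      have : MS * MY * MT = 1 := Subtype.ext (by decide)
      rw [this, map_one]
    · exact closure_contains_top
        (subset_closure (by simp)) (subset_closure (by simp))
  · refine ⟨π MU, π MV, π MW, ?_, ?_, ?_, ?_, ?_⟩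
    · exact order_four (Subtype.ext (by decide)) (by decide)
    · exact order_four (Subtype.ext (by decide)) (by decide)
    · exact order_four (Subtype.ext (by decide)) (by decide)
    · rw [← map_mul, ← map_mul]
      have : MU * MV * MW = 1 := Subtype.ext (by decide)
      rw [this, map_one]
    · have hU : π MU ∈ Subgroup.closure ({π MU, π MV, π MW} : Set PSL₂F₇) := subset_closure (by simp)
      have hV : π MV ∈ Subgroup.closure ({π MU, π MV, π MW} : Set PSL₂F₇) := subset_closure (by simp)
      refine closure_contains_top ?_ ?_
      · -- MS * MU * MU = MU * MU * MV * MV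
        have hid : MS = MU * MU * MV * MV * MU⁻¹ * MU⁻¹ := by
          have h : MS * MU * MU = MU * MU * MV * MV := Subtype.ext (by decide)
          group
          rw [← h]
          group
        rw [hid, map_mul, map_mul, map_mul, map_mul, map_mul]
        simp only [map_inv]
        exact mul_mem (mul_mem (mul_mem (mul_mem (mul_mem hU hU) hV) hV) (inv_mem hU)) (inv_mem hU)
      · -- MT = MV⁻¹ * MU
        have hid : MT = MV⁻¹ * MU := by
          have h : MV * MT = MU := Subtype.ext (by decide)
          rw [← h]; group
        rw [hid, map_mul, map_inv]
        exact mul_mem (inv_mem hV) hU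
end
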